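/- Let D₁ ⊆ ℂⁿ and D₂ ⊆ ℂᵐ be domains that are Kobayashi hyperbolic (i.e. k_{D₁} and k_{D₂} are distances) and each of which admits a non-constant bounded holomorphic function. Then the product domain D₁ × D₂ ⊆ ℂ^{n+m} is not Gromov hyperbolic with respect to its Kobayashi distance k_{D₁ × D₂}. -/

import Mathlib

open Metric Set

noncomputable section

/-- Inverse hyperbolic tangent: `artanh t = (1/2) * log ((1+t)/(1-t))`. -/
def artanh (x : ℝ) : ℝ := Real.log ((1 + x) / (1 - x)) / 2

variable {E : Type*} [NormedAddCommGroup E] [NormedSpace ℂ E]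

/-- The Lempert function of a set `D ⊆ E`:
`l_D(z,w) = inf { artanh |α| : ∃ φ : 𝔻 → D holomorphic, φ 0 = z, φ α = w }`. -/
def lempert (D : Set E) (z w : E) : ℝ :=
  sInf { r : ℝ | ∃ α : ℂ, ‖α‖ < 1 ∧
    (∃ φ : ℂ → E, DifferentiableOn ℂ φ (ball 0 1) ∧ MapsTo φ (ball 0 1) D ∧
      φ 0 = z ∧ φ α = w) ∧ r = artanh ‖α‖ }

/-- The Kobayashi pseudodistance: infimum of `∑ l_D(z_{i-1}, z_i)` over all finite
chains of points `z = c 0, c 1, …, c m = w` in `D`. -/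
def kobayashi (D : Set E) (z w : E) : ℝ :=
  sInf { r : ℝ | ∃ (m : ℕ) (c : ℕ → E), c 0 = z ∧ c m = w ∧ (∀ i ≤ m, c i ∈ D) ∧
    r = ∑ i ∈ Finset.range m, lempert D (c i) (c (i + 1)) }

/-- The Carathéodory pseudodistance:
`c_D(z,w) = sup { artanh |f w| : f : D → 𝔻 holomorphic, f z = 0 }`. -/
def caratheodory (D : Set E) (z w : E) : ℝ :=
  sSup { r : ℝ | ∃ f : E → ℂ, DifferentiableOn ℂ f D ∧ MapsTo f D (ball 0 1) ∧
    f z = 0 ∧ r = artanh ‖f w‖ }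

/-- `(D, d)` is Gromov hyperbolic if
`sup_{p,q,x,w ∈ D} ( min{(p,x)_w, (x,q)_w} − (p,q)_w ) < ∞`, where
`(x,y)_z = d x z + d z y - d x y` is the Gromov product. -/
def GromovHyperbolicWith (D : Set E) (d : E → E → ℝ) : Prop :=
  ∃ C : ℝ, ∀ p ∈ D, ∀ q ∈ D, ∀ x ∈ D, ∀ w ∈ D,
    min (d p w + d w x - d p x) (d x w + d w q - d x q) - (d p w + d w q - d p q) ≤ C

end


noncomputable section
namespace KobAux
open Complex Metric Set

lemma artanh_zero : artanh 0 = 0 := by simp [artanh]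

lemma artanh_nonneg {x : ℝ} (h0 : 0 ≤ x) (h1 : x < 1) : 0 ≤ artanh x := by
  have h : (1:ℝ) ≤ (1 + x) / (1 - x) := by
    rw [le_div_iff₀ (by linarith)]; linarith
  have := Real.log_nonneg h
  unfold artanh; linarith

lemma artanh_le_artanh {x y : ℝ} (h0 : 0 ≤ x) (hxy : x ≤ y) (h1 : y < 1) :
    artanh x ≤ artanh y := by
  have hx1 : x < 1 := lt_of_le_of_lt hxy h1
  have h : (1 + x)/(1 - x) ≤ (1 + y)/(1 - y) := by
    rw [div_le_div_iff₀ (by linarith) (by linarith)]; nlinarith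
  have hpos : (0:ℝ) < (1 + x)/(1 - x) := div_pos (by linarith) (by linarith)
  have := Real.log_le_log hpos h
  unfold artanh; linarith

lemma artanh_lt_artanh {x y : ℝ} (h0 : 0 ≤ x) (hxy : x < y) (h1 : y < 1) :
    artanh x < artanh y := by
  have h : (1 + x)/(1 - x) < (1 + y)/(1 - y) := by
    rw [div_lt_div_iff₀ (by linarith) (by linarith)]; nlinarith
  have hpos : (0:ℝ) < (1+x)/(1-x) := div_pos (by linarith) (by linarith)
  have := Real.log_lt_log hpos h
  unfold artanh; linarith

lemma artanh_add {a b : ℝ} (ha0 : 0 ≤ a) (ha1 : a < 1) (hb0 : 0 ≤ b) (hb1 : b < 1) :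
    artanh a + artanh b = artanh ((a + b) / (1 + a * b)) := by
  have hab : (0:ℝ) < 1 + a*b := by nlinarith
  have ha : (0:ℝ) < 1 - a := by linarith
  have hb : (0:ℝ) < 1 - b := by linarith
  have h1 : 1 + (a+b)/(1+a*b) = (1+a)*(1+b)/(1+a*b) := by field_simp; ring
  have h2 : 1 - (a+b)/(1+a*b) = (1-a)*(1-b)/(1+a*b) := by field_simp; ring
  have key : (1 + (a+b)/(1+a*b)) / (1 - (a+b)/(1+a*b)) = ((1+a)/(1-a)) * ((1+b)/(1-b)) := by
    rw [h1, h2]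
    rw [div_div_div_comm]
    rw [div_self (ne_of_gt hab), div_one]
    rw [div_mul_div_comm]
  unfold artanh
  rw [key, Real.log_mul (by positivity) (by positivity)]
  ring

def th (r : ℝ) : ℝ := (Real.exp (2*r) - 1) / (Real.exp (2*r) + 1)

lemma th_lt_one (r : ℝ) : th r < 1 := by
  have h : (0:ℝ) < Real.exp (2*r) + 1 := by positivity
  rw [th, div_lt_one h]; linarith

lemma th_nonneg {r : ℝ} (h : 0 ≤ r) : 0 ≤ th r := by
  have h1 : (1:ℝ) ≤ Real.exp (2*r) := Real.one_le_exp (by linarith)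
  have h2 : (0:ℝ) < Real.exp (2*r) + 1 := by positivity
  exact div_nonneg (by linarith) h2.le

lemma th_mono {r s : ℝ} (h : r ≤ s) : th r ≤ th s := by
  have h1 : Real.exp (2*r) ≤ Real.exp (2*s) := Real.exp_le_exp.2 (by linarith)
  have h2 : (0:ℝ) < Real.exp (2*r) + 1 := by positivity
  have h3 : (0:ℝ) < Real.exp (2*s) + 1 := by positivity
  rw [th, th, div_le_div_iff₀ h2 h3]; nlinarith

lemma artanh_th (r : ℝ) : artanh (th r) = r := by
  have hT1 : th r < 1 := th_lt_one r
  have h1 : (1:ℝ) - th r ≠ 0 := by linarith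
  have he : (0:ℝ) < Real.exp (2*r) + 1 := by positivity
  have key : (1 + th r) / (1 - th r) = Real.exp (2*r) := by
    rw [div_eq_iff h1, th]; field_simp; ring
  rw [artanh, key, Real.log_exp]; ring

lemma th_artanh {a : ℝ} (h0 : 0 ≤ a) (h1 : a < 1) : th (artanh a) = a := by
  have hd : (0:ℝ) < 1 - a := by linarith
  have hne : (1:ℝ) - a ≠ 0 := ne_of_gt hd
  have hpos : (0:ℝ) < (1+a)/(1-a) := div_pos (by linarith) hd
  have he : Real.exp (2 * artanh a) = (1+a)/(1-a) := by
    rw [artanh, show 2 * (Real.log ((1+a)/(1-a)) / 2) = Real.log ((1+a)/(1-a)) by ring,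
      Real.exp_log hpos]
  have hden : (0:ℝ) < (1+a)/(1-a) + 1 := by positivity
  rw [th, he]
  rw [div_eq_iff (ne_of_gt hden)]
  field_simp
  ring

lemma artanh_sub {a b : ℝ} (hb0 : 0 ≤ b) (hba : b ≤ a) (ha1 : a < 1) :
    artanh ((a - b)/(1 - a*b)) = artanh a - artanh b := by
  have ha0 : 0 ≤ a := le_trans hb0 hba
  have hb1 : b < 1 := lt_of_le_of_lt hba ha1
  have hd : (0:ℝ) < 1 - a*b := by nlinarith
  have hq0 : 0 ≤ (a - b)/(1 - a*b) := div_nonneg (by linarith) hd.le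
  have hq1 : (a - b)/(1 - a*b) < 1 := by rw [div_lt_one hd]; nlinarith
  have := artanh_add hq0 hq1 hb0 hb1
  have key : ((a - b)/(1 - a*b) + b) / (1 + (a - b)/(1 - a*b) * b) = a := by
    rw [div_eq_iff]
    · field_simp; ring
    · have h1 : 1 + (a - b)/(1 - a*b) * b = (1 - b*b)/(1 - a*b) := by field_simp; ring
      rw [h1]
      have : (0:ℝ) < 1 - b*b := by nlinarith
      positivity
  rw [key] at this
  linarith


lemma normSq_norm (z : ℂ) : ‖z‖^2 = Complex.normSq z := by
  rw [Complex.sq_norm]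

lemma norm_sub_sq' (a b : ℂ) :
    ‖a - b‖^2 = ‖a‖^2 + ‖b‖^2 - 2*((starRingEnd ℂ) a * b).re := by
  rw [normSq_norm, normSq_norm, normSq_norm]
  simp [Complex.normSq_apply, Complex.sub_re, Complex.sub_im, Complex.mul_re, Complex.mul_im,
    Complex.conj_re, Complex.conj_im]
  ring

lemma norm_one_sub_sq (a b : ℂ) :
    ‖1 - (starRingEnd ℂ) a * b‖^2 = 1 - 2*((starRingEnd ℂ) a * b).re + ‖a‖^2*‖b‖^2 := by
  rw [normSq_norm, normSq_norm, normSq_norm]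
  simp [Complex.normSq_apply, Complex.sub_re, Complex.sub_im, Complex.mul_re, Complex.mul_im,
    Complex.conj_re, Complex.conj_im, Complex.one_re, Complex.one_im]
  ring

lemma key_identity (a b : ℂ) :
    ‖1 - (starRingEnd ℂ) a * b‖^2 - ‖a - b‖^2 = (1 - ‖a‖^2)*(1 - ‖b‖^2) := by
  rw [norm_one_sub_sq, norm_sub_sq']; ring

lemma one_sub_conj_mul_ne_zero {a b : ℂ} (ha : ‖a‖ < 1) (hb : ‖b‖ ≤ 1) :
    1 - (starRingEnd ℂ) a * b ≠ 0 := by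
  intro h
  have h2 : (1:ℂ) = (starRingEnd ℂ) a * b := by linear_combination h
  have : ‖(starRingEnd ℂ) a * b‖ < 1 := by
    rw [norm_mul, RCLike.norm_conj]
    nlinarith [norm_nonneg a, norm_nonneg b]
  rw [← h2] at this; simp at this


/-- The Möbius involution `M_c(z) = (c - z)/(1 - conj c * z)`. -/
def mob (c z : ℂ) : ℂ := (c - z) / (1 - (starRingEnd ℂ) c * z)

/-- Pseudo-hyperbolic distance on the unit disc. -/
def md (a b : ℂ) : ℝ := ‖a - b‖ / ‖1 - (starRingEnd ℂ) a * b‖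

lemma md_nonneg (a b : ℂ) : 0 ≤ md a b := div_nonneg (norm_nonneg _) (norm_nonneg _)

lemma norm_mob (c z : ℂ) : ‖mob c z‖ = md c z := by rw [mob, md, norm_div]

lemma md_self (a : ℂ) : md a a = 0 := by simp [md]

lemma md_zero_left (b : ℂ) : md 0 b = ‖b‖ := by simp [md]

lemma md_symm (a b : ℂ) : md a b = md b a := by
  rw [md, md, norm_sub_rev]
  congr 1
  rw [show (1 : ℂ) - (starRingEnd ℂ) b * a = (starRingEnd ℂ) (1 - (starRingEnd ℂ) a * b) by
    simp [map_sub, map_mul]; ring, RCLike.norm_conj]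

lemma md_lt_one {a b : ℂ} (ha : ‖a‖ < 1) (hb : ‖b‖ < 1) : md a b < 1 := by
  have hkey := key_identity a b
  have ha2 : ‖a‖^2 < 1 := by nlinarith [norm_nonneg a]
  have hb2 : ‖b‖^2 < 1 := by nlinarith [norm_nonneg b]
  have h1 : (0:ℝ) < (1 - ‖a‖^2)*(1 - ‖b‖^2) := mul_pos (by linarith) (by linarith)
  have h2 : ‖a - b‖ < ‖1 - (starRingEnd ℂ) a * b‖ := by
    have := norm_nonneg (a - b)
    nlinarith [norm_nonneg (1 - (starRingEnd ℂ) a * b)]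
  have h3 : (0:ℝ) < ‖1 - (starRingEnd ℂ) a * b‖ := lt_of_le_of_lt (norm_nonneg _) h2
  rw [md, div_lt_one h3]; exact h2

lemma mob_mem_ball {c z : ℂ} (hc : ‖c‖ < 1) (hz : ‖z‖ < 1) : ‖mob c z‖ < 1 := by
  rw [norm_mob]; exact md_lt_one hc hz

lemma mob_zero (c : ℂ) : mob c 0 = c := by simp [mob]

lemma mob_mob {c z : ℂ} (hc : ‖c‖ < 1) (hz : ‖z‖ < 1) : mob c (mob c z) = z := by
  have h1 : 1 - (starRingEnd ℂ) c * z ≠ 0 := one_sub_conj_mul_ne_zero hc hz.le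
  have h3 : 1 - (starRingEnd ℂ) c * c ≠ 0 := one_sub_conj_mul_ne_zero hc hc.le
  have hno : c - (c - z)/(1 - (starRingEnd ℂ) c * z)
      = z * (1 - (starRingEnd ℂ) c * c) / (1 - (starRingEnd ℂ) c * z) := by
    rw [eq_div_iff h1, sub_mul, div_mul_cancel₀ _ h1]; ring
  have hdo : 1 - (starRingEnd ℂ) c * ((c - z)/(1 - (starRingEnd ℂ) c * z))
      = (1 - (starRingEnd ℂ) c * c)/(1 - (starRingEnd ℂ) c * z) := by
    field_simp; ring
  rw [mob, mob, hno, hdo, div_div_div_comm, div_self h1, div_one, mul_div_assoc,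
    div_self h3, mul_one]

lemma mob_differentiableOn (c : ℂ) (hc : ‖c‖ < 1) :
    DifferentiableOn ℂ (mob c) (ball 0 1) := by
  apply DifferentiableOn.div
  · exact (differentiable_const c |>.sub differentiable_id).differentiableOn
  · exact ((differentiable_const (1:ℂ)).sub
      ((differentiable_const _).mul differentiable_id)).differentiableOn
  · intro z hz
    exact one_sub_conj_mul_ne_zero hc (le_of_lt (mem_ball_zero_iff.1 hz))

lemma mob_mapsTo {c : ℂ} (hc : ‖c‖ < 1) : MapsTo (mob c) (ball 0 1) (ball 0 1) := by
  intro z hz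
  rw [mem_ball_zero_iff] at hz ⊢
  exact mob_mem_ball hc hz

/-- **Schwarz–Pick lemma.** -/
lemma schwarz_pick {h : ℂ → ℂ} (hd : DifferentiableOn ℂ h (ball 0 1))
    (hm : MapsTo h (ball 0 1) (ball 0 1)) {a b : ℂ} (ha : ‖a‖ < 1) (hb : ‖b‖ < 1) :
    md (h a) (h b) ≤ md a b := by
  have haB : a ∈ ball (0:ℂ) 1 := mem_ball_zero_iff.2 ha
  have hha : ‖h a‖ < 1 := mem_ball_zero_iff.1 (hm haB)
  set H : ℂ → ℂ := fun z => mob (h a) (h (mob a z)) with hH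
  have hm0 : MapsTo (mob a) (ball 0 1) (ball 0 1) := mob_mapsTo ha
  have hm1 : MapsTo (fun z => h (mob a z)) (ball (0:ℂ) 1) (ball (0:ℂ) 1) :=
    fun z hz => hm (hm0 hz)
  have hd1 : DifferentiableOn ℂ (fun z => h (mob a z)) (ball 0 1) :=
    hd.comp (mob_differentiableOn a ha) hm0
  have hHd : DifferentiableOn ℂ H (ball 0 1) :=
    (mob_differentiableOn (h a) hha).comp hd1 hm1
  have hHm : MapsTo H (ball (0:ℂ) 1) (ball (0:ℂ) 1) :=
    fun z hz => mob_mapsTo hha (hm1 hz)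
  have hH0 : H 0 = 0 := by
    have : mob a 0 = a := mob_zero a
    simp only [hH, this]
    simp [mob]
  have hzb : ‖mob a b‖ < 1 := by
    exact mob_mem_ball ha hb
  have hs := Complex.norm_le_norm_of_mapsTo_ball hHd (hHm.mono_right ball_subset_closedBall) hH0 hzb
  have hHab : H (mob a b) = mob (h a) (h b) := by
    simp only [hH, mob_mob ha hb]
  calc md (h a) (h b) = ‖mob (h a) (h b)‖ := (norm_mob _ _).symm
    _ = ‖H (mob a b)‖ := by rw [hHab]
    _ ≤ ‖mob a b‖ := hs
    _ = md a b := by rw [norm_mob]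


lemma md_mob_inv {c a b : ℂ} (hc : ‖c‖ < 1) (ha : ‖a‖ < 1) (hb : ‖b‖ < 1) :
    md (mob c a) (mob c b) = md a b := by
  refine le_antisymm (schwarz_pick (mob_differentiableOn c hc) (mob_mapsTo hc) ha hb) ?_
  have := schwarz_pick (mob_differentiableOn c hc) (mob_mapsTo hc)
    (mob_mem_ball hc ha) (mob_mem_ball hc hb)
  rwa [mob_mob hc ha, mob_mob hc hb] at this

lemma md_central {a c : ℂ} (ha : ‖a‖ < 1) (hc : ‖c‖ < 1) :
    md a c ≤ (‖a‖ + ‖c‖) / (1 + ‖a‖ * ‖c‖) := by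
  set r := ‖a‖ with hr
  set s := ‖c‖ with hs
  have hr0 : 0 ≤ r := norm_nonneg a
  have hs0 : 0 ≤ s := norm_nonneg c
  set x := ((starRingEnd ℂ) a * c).re with hxdef
  have hx : |x| ≤ r * s := by
    have h1 : |x| ≤ ‖(starRingEnd ℂ) a * c‖ := Complex.abs_re_le_norm _
    have h2 : ‖(starRingEnd ℂ) a * c‖ = r * s := by
      rw [norm_mul, RCLike.norm_conj]
    linarith [h1, h2.le, h2.ge]
  have hN : (0:ℝ) < ‖1 - (starRingEnd ℂ) a * c‖ :=
    norm_pos_iff.2 (one_sub_conj_mul_ne_zero ha hc.le)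
  have hD : (0:ℝ) < 1 + r * s := by nlinarith
  rw [md, div_le_div_iff₀ hN hD]
  have e1 : ‖a - c‖^2 = r^2 + s^2 - 2*x := by rw [norm_sub_sq' a c]
  have e2 : ‖1 - (starRingEnd ℂ) a * c‖^2 = 1 - 2*x + r^2*s^2 := by
    rw [norm_one_sub_sq a c]
  have hx' : 0 ≤ x + r * s := by have := abs_le.1 hx; linarith
  have h1r : (0:ℝ) ≤ 1 - r^2 := by nlinarith
  have h1s : (0:ℝ) ≤ 1 - s^2 := by nlinarith
  have key : ((r+s) * ‖1 - (starRingEnd ℂ) a * c‖)^2 - (‖a - c‖ * (1 + r*s))^2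
      = 2*(1-r^2)*(1-s^2)*(x + r*s) := by
    rw [mul_pow, mul_pow, e1, e2]; ring
  have hsq : (‖a - c‖ * (1 + r*s))^2 ≤ ((r+s) * ‖1 - (starRingEnd ℂ) a * c‖)^2 := by
    nlinarith [key, mul_nonneg (mul_nonneg h1r h1s) hx']
  have hL : 0 ≤ ‖a - c‖ * (1 + r*s) := mul_nonneg (norm_nonneg _) hD.le
  have hR : 0 ≤ (r+s) * ‖1 - (starRingEnd ℂ) a * c‖ := mul_nonneg (by linarith) hN.le
  nlinarith [hsq, hL, hR]

def rho (a b : ℂ) : ℝ := artanh (md a b)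

lemma rho_nonneg {a b : ℂ} (ha : ‖a‖ < 1) (hb : ‖b‖ < 1) : 0 ≤ rho a b :=
  artanh_nonneg (md_nonneg a b) (md_lt_one ha hb)

lemma rho_symm (a b : ℂ) : rho a b = rho b a := by rw [rho, rho, md_symm]

lemma rho_triangle {a b c : ℂ} (ha : ‖a‖ < 1) (hb : ‖b‖ < 1) (hc : ‖c‖ < 1) :
    rho a c ≤ rho a b + rho b c := by
  set p := md a b with hp
  set q := md b c with hq
  have hp0 : 0 ≤ p := md_nonneg a b
  have hq0 : 0 ≤ q := md_nonneg b c
  have hp1 : p < 1 := md_lt_one ha hb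
  have hq1 : q < 1 := md_lt_one hb hc
  rw [rho, rho, rho, artanh_add hp0 hp1 hq0 hq1]
  have hpq1 : (p + q)/(1 + p*q) < 1 := by
    rw [div_lt_one (by nlinarith)]; nlinarith
  apply artanh_le_artanh (md_nonneg a c) ?_ hpq1
  have inv : md a c = md (mob b a) (mob b c) := (md_mob_inv hb ha hc).symm
  have hna : ‖mob b a‖ = p := by rw [norm_mob, md_symm]
  have hnc : ‖mob b c‖ = q := by rw [norm_mob]
  have := md_central (mob_mem_ball hb ha) (mob_mem_ball hb hc)
  rw [hna, hnc] at this
  rw [inv]; exact this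

/-! ### Lempert and Kobayashi basics -/

variable {E : Type*} [NormedAddCommGroup E] [NormedSpace ℂ E]
variable {F : Type*} [NormedAddCommGroup F] [NormedSpace ℂ F]

def IsDisc (D : Set E) (z w : E) (r : ℝ) : Prop :=
  ∃ α : ℂ, ‖α‖ < 1 ∧
    (∃ φ : ℂ → E, DifferentiableOn ℂ φ (ball 0 1) ∧ MapsTo φ (ball 0 1) D ∧
      φ 0 = z ∧ φ α = w) ∧ r = artanh ‖α‖

lemma lempert_eq (D : Set E) (z w : E) : lempert D z w = sInf {r | IsDisc D z w r} := rfl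

lemma isDisc_nonneg {D : Set E} {z w : E} {r : ℝ} (h : IsDisc D z w r) : 0 ≤ r := by
  obtain ⟨α, hα, -, hr⟩ := h
  rw [hr]; exact artanh_nonneg (norm_nonneg α) hα

lemma isDisc_bddBelow (D : Set E) (z w : E) : BddBelow {r | IsDisc D z w r} :=
  ⟨0, fun r hr => isDisc_nonneg hr⟩

lemma lempert_nonneg (D : Set E) (z w : E) : 0 ≤ lempert D z w :=
  Real.sInf_nonneg (fun _ hr => isDisc_nonneg hr)

lemma lempert_le {D : Set E} {z w : E} {r : ℝ} (h : IsDisc D z w r) : lempert D z w ≤ r :=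
  csInf_le (isDisc_bddBelow D z w) h

lemma isDisc_self {D : Set E} {z : E} (hz : z ∈ D) : IsDisc D z z 0 := by
  refine ⟨0, by simp, ⟨fun _ => z, differentiableOn_const z, fun x _ => hz, rfl, rfl⟩, ?_⟩
  simp [artanh_zero]

lemma isDisc_mem_left {D : Set E} {z w : E} {r : ℝ} (h : IsDisc D z w r) : z ∈ D := by
  obtain ⟨α, hα, ⟨φ, hd, hm, h0, hα'⟩, -⟩ := h
  rw [← h0]; exact hm (by simp [mem_ball_zero_iff])

lemma isDisc_mem_right {D : Set E} {z w : E} {r : ℝ} (h : IsDisc D z w r) : w ∈ D := by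
  obtain ⟨α, hα, ⟨φ, hd, hm, h0, hα'⟩, -⟩ := h
  rw [← hα']; exact hm (mem_ball_zero_iff.2 hα)

lemma isDisc_symm {D : Set E} {z w : E} {r : ℝ} (h : IsDisc D z w r) : IsDisc D w z r := by
  obtain ⟨α, hα, ⟨φ, hd, hm, h0, hα'⟩, hr⟩ := h
  refine ⟨α, hα, ⟨fun ζ => φ (mob α ζ), hd.comp (mob_differentiableOn α hα) (mob_mapsTo hα),
    fun ζ hζ => hm (mob_mapsTo hα hζ), ?_, ?_⟩, hr⟩
  · show φ (mob α 0) = w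
    rw [mob_zero, hα']
  · show φ (mob α α) = z
    rw [show mob α α = 0 by simp [mob], h0]

lemma lempert_symm (D : Set E) (z w : E) : lempert D z w = lempert D w z := by
  rw [lempert_eq, lempert_eq]
  congr 1
  ext r
  exact ⟨fun h => isDisc_symm h, fun h => isDisc_symm h⟩

lemma isDisc_lt {D : Set E} {z w : E} (hne : ∃ r, IsDisc D z w r) {ε : ℝ} (hε : 0 < ε) :
    ∃ r, IsDisc D z w r ∧ r < lempert D z w + ε := by
  obtain ⟨r, hr, hlt⟩ := Real.lt_sInf_add_pos hne hε
  exact ⟨r, hr, hlt⟩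

/-! ### chains -/

lemma kobayashi_bddBelow (D : Set E) (z w : E) :
    BddBelow { r : ℝ | ∃ (m : ℕ) (c : ℕ → E), c 0 = z ∧ c m = w ∧ (∀ i ≤ m, c i ∈ D) ∧
      r = ∑ i ∈ Finset.range m, lempert D (c i) (c (i + 1)) } := by
  refine ⟨0, fun r hr => ?_⟩
  obtain ⟨m, c, -, -, -, hsum⟩ := hr
  rw [hsum]
  exact Finset.sum_nonneg fun i _ => lempert_nonneg D _ _

lemma kobayashi_nonneg (D : Set E) (z w : E) : 0 ≤ kobayashi D z w :=
  Real.sInf_nonneg (fun r hr => by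
    obtain ⟨m, c, -, -, -, hsum⟩ := hr
    rw [hsum]
    exact Finset.sum_nonneg fun i _ => lempert_nonneg D _ _)

lemma kobayashi_le_chain {D : Set E} {z w : E} {m : ℕ} {c : ℕ → E}
    (h0 : c 0 = z) (hm : c m = w) (hmem : ∀ i ≤ m, c i ∈ D) :
    kobayashi D z w ≤ ∑ i ∈ Finset.range m, lempert D (c i) (c (i + 1)) :=
  csInf_le (kobayashi_bddBelow D z w) ⟨m, c, h0, hm, hmem, rfl⟩

lemma kobayashi_le_lempert {D : Set E} {z w : E} (hz : z ∈ D) (hw : w ∈ D) :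
    kobayashi D z w ≤ lempert D z w := by
  have := kobayashi_le_chain (D := D) (z := z) (w := w) (m := 1)
    (c := fun i => if i = 0 then z else w)
    (by simp) (by simp) (by
      intro i hi
      by_cases h : i = 0 <;> simp [h, hz, hw])
  simpa using this

lemma kobayashi_chains_nonempty {D : Set E} {z w : E} (hz : z ∈ D) (hw : w ∈ D) :
    Set.Nonempty { r : ℝ | ∃ (m : ℕ) (c : ℕ → E), c 0 = z ∧ c m = w ∧ (∀ i ≤ m, c i ∈ D) ∧
      r = ∑ i ∈ Finset.range m, lempert D (c i) (c (i + 1)) } := by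
  refine ⟨lempert D z w, 1, fun i => if i = 0 then z else w, by simp, by simp, ?_, by simp⟩
  intro i hi
  by_cases h : i = 0 <;> simp [h, hz, hw]

lemma kobayashi_triangle {D : Set E} {z x w : E} (hz : z ∈ D) (hx : x ∈ D) (hw : w ∈ D) :
    kobayashi D z w ≤ kobayashi D z x + kobayashi D x w := by
  refine le_of_forall_pos_le_add fun ε hε => ?_
  obtain ⟨r1, ⟨m1, c1, hc10, hc1m, hc1mem, hr1⟩, hr1lt⟩ :=
    Real.lt_sInf_add_pos (kobayashi_chains_nonempty hz hx) (half_pos hε)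
  obtain ⟨r2, ⟨m2, c2, hc20, hc2m, hc2mem, hr2⟩, hr2lt⟩ :=
    Real.lt_sInf_add_pos (kobayashi_chains_nonempty hx hw) (half_pos hε)
  set c : ℕ → E := fun i => if i < m1 then c1 i else c2 (i - m1) with hc
  have hcv1 : ∀ i ≤ m1, c i = c1 i := by
    intro i hi
    by_cases h : i < m1
    · simp [hc, h]
    · have : i = m1 := by omega
      simp [hc, this, hc20, hc1m]
  have hcv2 : ∀ i, m1 ≤ i → c i = c2 (i - m1) := by
    intro i hi
    have h : ¬ i < m1 := by omega
    simp only [hc]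
    rw [if_neg h]
  have h0 : c 0 = z := by rw [hcv1 0 (Nat.zero_le _), hc10]
  have hmm : c (m1 + m2) = w := by
    rw [hcv2 _ (Nat.le_add_right _ _)]
    simpa using hc2m
  have hmem : ∀ i ≤ m1 + m2, c i ∈ D := by
    intro i hi
    by_cases h : i < m1
    · rw [hcv1 i h.le]; exact hc1mem i h.le
    · rw [hcv2 i (by omega)]; exact hc2mem _ (by omega)
  have hk := kobayashi_le_chain h0 hmm hmem
  have hsum : ∑ i ∈ Finset.range (m1 + m2), lempert D (c i) (c (i + 1)) = r1 + r2 := by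
    rw [Finset.sum_range_add, hr1, hr2]
    congr 1
    · apply Finset.sum_congr rfl
      intro i hi
      rw [Finset.mem_range] at hi
      rw [hcv1 i (by omega), hcv1 (i+1) (by omega)]
    · apply Finset.sum_congr rfl
      intro i hi
      rw [Finset.mem_range] at hi
      rw [hcv2 (m1 + i) (by omega), hcv2 (m1 + i + 1) (by omega)]
      congr 2 <;> omega
  rw [hsum] at hk
  have hk1 : r1 < kobayashi D z x + ε/2 := hr1lt
  have hk2 : r2 < kobayashi D x w + ε/2 := hr2lt
  calc kobayashi D z w ≤ r1 + r2 := hk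
    _ ≤ (kobayashi D z x + ε/2) + (kobayashi D x w + ε/2) := add_le_add hk1.le hk2.le
    _ = kobayashi D z x + kobayashi D x w + ε := by ring

lemma chain_reverse {D : Set E} {a b : E} {r : ℝ}
    (h : ∃ (m : ℕ) (c : ℕ → E), c 0 = a ∧ c m = b ∧ (∀ i ≤ m, c i ∈ D) ∧
      r = ∑ i ∈ Finset.range m, lempert D (c i) (c (i + 1))) :
    ∃ (m : ℕ) (c : ℕ → E), c 0 = b ∧ c m = a ∧ (∀ i ≤ m, c i ∈ D) ∧
      r = ∑ i ∈ Finset.range m, lempert D (c i) (c (i + 1)) := by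
  obtain ⟨m, c, h0, hm, hmem, hsum⟩ := h
  refine ⟨m, fun i => c (m - i), by simpa using hm, by simpa using h0,
    fun i _ => hmem (m - i) (Nat.sub_le _ _), ?_⟩
  rw [hsum]
  have key : ∀ i ∈ Finset.range m,
      lempert D (c (m - i)) (c (m - (i + 1)))
        = (fun j => lempert D (c j) (c (j + 1))) (m - 1 - i) := by
    intro i hi
    rw [Finset.mem_range] at hi
    have e1 : m - (i + 1) = m - 1 - i := by omega
    have e2 : m - i = m - 1 - i + 1 := by omega
    rw [lempert_symm, e1, e2]
  calc ∑ i ∈ Finset.range m, lempert D (c i) (c (i + 1))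
      = ∑ i ∈ Finset.range m, (fun j => lempert D (c j) (c (j + 1))) (m - 1 - i) :=
        (Finset.sum_range_reflect _ m).symm
    _ = ∑ i ∈ Finset.range m, lempert D (c (m - i)) (c (m - (i + 1))) :=
        (Finset.sum_congr rfl key).symm

lemma kobayashi_symm (D : Set E) (z w : E) : kobayashi D z w = kobayashi D w z := by
  unfold kobayashi
  congr 1
  ext r
  exact ⟨fun h => chain_reverse h, fun h => chain_reverse h⟩

/-! ### splitting discs -/

lemma isDisc_split {D : Set E} {z w : E} {r s : ℝ} (h : IsDisc D z w r)
    (hs0 : 0 ≤ s) (hsr : s ≤ r) :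
    ∃ u, IsDisc D z u s ∧ IsDisc D u w (r - s) := by
  obtain ⟨α, hα, ⟨φ, hφd, hφm, hφ0, hφα⟩, hr⟩ := h
  by_cases hα0 : α = 0
  · have hw : w = z := by rw [← hφα, hα0, hφ0]
    have hr0 : r = 0 := by rw [hr, hα0]; simp [artanh_zero]
    have hs : s = 0 := le_antisymm (by linarith) hs0
    have hzD : z ∈ D := by rw [← hφ0]; exact hφm (mem_ball_zero_iff.2 (by norm_num))
    refine ⟨z, ?_, ?_⟩
    · rw [hs]; exact isDisc_self hzD
    · rw [hw, hr0, hs]; simpa using isDisc_self hzD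
  · set a := ‖α‖ with ha
    have ha0 : 0 < a := norm_pos_iff.2 hα0
    have ha1 : a < 1 := hα
    set b := th s with hb
    have hb0 : 0 ≤ b := th_nonneg hs0
    have hb1 : b < 1 := th_lt_one s
    have hba : b ≤ a := by
      have := th_mono hsr
      rwa [hr, th_artanh (norm_nonneg α) hα] at this
    have hsb : artanh b = s := artanh_th s
    set β : ℂ := (↑(b / a) : ℂ) * α with hβ
    have hβn : ‖β‖ = b := by
      rw [hβ, norm_mul, Complex.norm_real, Real.norm_eq_abs,
        _root_.abs_of_nonneg (div_nonneg hb0 ha0.le), ← ha,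
        div_mul_cancel₀ _ (ne_of_gt ha0)]
    have hβ1 : ‖β‖ < 1 := by rw [hβn]; exact hb1
    have hconj : (starRingEnd ℂ) β * α = ((a * b : ℝ) : ℂ) := by
      have h1 : (starRingEnd ℂ) α * α = ((a^2 : ℝ) : ℂ) := by
        rw [mul_comm, Complex.mul_conj, Complex.normSq_eq_norm_sq, ← ha]
      calc (starRingEnd ℂ) (((b/a : ℝ) : ℂ) * α) * α
          = ((b/a : ℝ) : ℂ) * ((starRingEnd ℂ) α * α) := by
            rw [map_mul, Complex.conj_ofReal]; ring
        _ = ((b/a : ℝ) : ℂ) * ((a^2 : ℝ) : ℂ) := by rw [h1]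
        _ = ((a * b : ℝ) : ℂ) := by
            have haC : (a:ℂ) ≠ 0 := Complex.ofReal_ne_zero.mpr (ne_of_gt ha0)
            push_cast
            field_simp
    have hnum : ‖β - α‖ = a - b := by
      have h2 : β - α = (((b/a - 1 : ℝ)) : ℂ) * α := by rw [hβ]; push_cast; ring
      have hba' : b / a ≤ 1 := by rw [div_le_one ha0]; exact hba
      rw [h2, norm_mul, Complex.norm_real, Real.norm_eq_abs, ← ha,
        _root_.abs_of_nonpos (by linarith)]
      field_simp
      ring
    have hab1 : (0:ℝ) < 1 - a * b := by nlinarith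
    have hden : ‖1 - (starRingEnd ℂ) β * α‖ = 1 - a * b := by
      rw [hconj, show (1:ℂ) - ((a*b:ℝ):ℂ) = (((1 - a*b :ℝ)):ℂ) by push_cast; ring,
        Complex.norm_real, Real.norm_eq_abs, abs_of_pos hab1]
    set γ := mob β α with hγ
    have hγ1 : ‖γ‖ < 1 := mob_mem_ball hβ1 hα
    have hγn : ‖γ‖ = (a - b)/(1 - a*b) := by rw [hγ, mob, norm_div, hnum, hden]
    have hγcost : artanh ‖γ‖ = r - s := by
      rw [hγn, artanh_sub hb0 hba ha1, ← hr, hsb]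
    refine ⟨φ β, ⟨β, hβ1, ⟨φ, hφd, hφm, hφ0, rfl⟩, by rw [hβn, hsb]⟩,
      ⟨γ, hγ1, ⟨fun ζ => φ (mob β ζ),
        hφd.comp (mob_differentiableOn β hβ1) (mob_mapsTo hβ1),
        fun ζ hζ => hφm (mob_mapsTo hβ1 hζ), ?_, ?_⟩, hγcost.symm⟩⟩
    · show φ (mob β 0) = φ β
      rw [mob_zero]
    · show φ (mob β γ) = w
      rw [hγ, mob_mob hβ1 hα, hφα]

lemma isDisc_subdiv {D : Set E} {z w : E} {r : ℝ} (h : IsDisc D z w r)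
    {n : ℕ} (hn : 0 < n) :
    ∃ c : ℕ → E, c 0 = z ∧ c n = w ∧ (∀ i ≤ n, c i ∈ D) ∧
      ∀ i < n, IsDisc D (c i) (c (i + 1)) (r / n) := by
  induction n generalizing z r with
  | zero => omega
  | succ n IH =>
    by_cases hn0 : n = 0
    · subst hn0
      refine ⟨fun i => if i = 0 then z else w, by simp, by simp, ?_, ?_⟩
      · intro i hi
        by_cases h0 : i = 0
        · simp [h0]; exact isDisc_mem_left h
        · simp [h0]; exact isDisc_mem_right h
      · intro i hi
        interval_cases i
        simpa using h
    · have hr0 : 0 ≤ r := isDisc_nonneg h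
      have hs0 : (0:ℝ) ≤ r / ((n+1 : ℕ) : ℝ) := by positivity
      have hsr : r / ((n+1 : ℕ) : ℝ) ≤ r := by
        apply div_le_self hr0
        push_cast
        linarith [Nat.cast_nonneg (α := ℝ) n]
      obtain ⟨u, h1, h2⟩ := isDisc_split h hs0 hsr
      have hn' : ((n:ℕ):ℝ) ≠ 0 := Nat.cast_ne_zero.2 hn0
      have hcost : (r - r / ((n+1 : ℕ) : ℝ)) / ((n:ℕ) : ℝ) = r / ((n+1 : ℕ) : ℝ) := by
        push_cast at *
        field_simp
        ring
      obtain ⟨c2, hc20, hc2n, hc2mem, hc2step⟩ := IH h2 (Nat.pos_of_ne_zero hn0)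
      refine ⟨fun i => if i = 0 then z else c2 (i - 1), by simp, ?_, ?_, ?_⟩
      · simp [hc2n]
      · intro i hi
        by_cases h0 : i = 0
        · simp only [h0, if_pos rfl]; exact isDisc_mem_left h1
        · simp only [if_neg h0]
          exact hc2mem (i-1) (by omega)
      · intro i hi
        by_cases h0 : i = 0
        · subst h0
          simp only [if_pos rfl, if_neg (by omega : ¬ (0+1 = 0))]
          show IsDisc D z (c2 (0 + 1 - 1)) (r / ((n+1:ℕ):ℝ))
          rw [show (0+1-1 : ℕ) = 0 from rfl, hc20]
          exact h1
        · simp only [if_neg h0, if_neg (by omega : ¬ (i+1 = 0))]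
          have e2 : i + 1 - 1 = (i - 1) + 1 := by omega
          rw [e2]
          have hstep := hc2step (i-1) (by omega)
          rwa [hcost] at hstep

/-! ### chain refinement -/

lemma chain_refine {D : Set E} (m : ℕ) (c : ℕ → E) (r : ℕ → ℝ)
    (hstep : ∀ i < m, IsDisc D (c i) (c (i+1)) (r i)) (hc0 : c 0 ∈ D)
    {δ : ℝ} (hδ : 0 < δ) :
    ∃ (N : ℕ) (e : ℕ → E) (ρ : ℕ → ℝ), e 0 = c 0 ∧ e N = c m ∧
      (∀ j ≤ N, e j ∈ D) ∧
      (∀ j < N, IsDisc D (e j) (e (j+1)) (ρ j) ∧ 0 ≤ ρ j ∧ ρ j ≤ δ) ∧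
      (∑ j ∈ Finset.range N, ρ j) = (∑ i ∈ Finset.range m, r i) ∧
      (N:ℝ) * δ ≤ (∑ i ∈ Finset.range m, r i) + m * δ := by
  induction m with
  | zero =>
    refine ⟨0, c, fun _ => 0, rfl, rfl, ?_, ?_, by simp, by simp⟩
    · intro j hj
      rw [Nat.le_zero.1 hj]; exact hc0
    · intro j hj; omega
  | succ m IH =>
    obtain ⟨N, e, ρ, he0, heN, hemem, hestep, hesum, heNδ⟩ :=
      IH (fun i hi => hstep i (by omega))
    have hlast := hstep m (by omega)
    have hrm0 : 0 ≤ r m := isDisc_nonneg hlast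
    set n : ℕ := max 1 ⌈r m / δ⌉₊ with hn
    have hn1 : 1 ≤ n := le_max_left _ _
    have hn0 : (0:ℝ) < (n:ℝ) := by exact_mod_cast hn1
    have hpiece_le : r m / (n:ℝ) ≤ δ := by
      rw [div_le_iff₀ hn0]
      have h1 := Nat.le_ceil (r m / δ)
      have h2 : ((⌈r m / δ⌉₊ : ℕ):ℝ) ≤ (n:ℝ) := by exact_mod_cast le_max_right _ _
      have h3 : r m / δ ≤ (n:ℝ) := le_trans h1 h2
      calc r m = (r m / δ) * δ := by field_simp
        _ ≤ (n:ℝ) * δ := mul_le_mul_of_nonneg_right h3 hδ.le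
        _ = δ * (n:ℝ) := by ring
    have hpiece0 : 0 ≤ r m / (n:ℝ) := div_nonneg hrm0 hn0.le
    have hnδ : (n:ℝ) * δ ≤ r m + δ := by
      have hceil : ((⌈r m / δ⌉₊ : ℕ):ℝ) < r m / δ + 1 :=
        Nat.ceil_lt_add_one (div_nonneg hrm0 hδ.le)
      rcases le_or_gt ⌈r m / δ⌉₊ 1 with hc1 | hc1
      · have : n = 1 := by omega
        rw [this]; push_cast; linarith
      · have : n = ⌈r m / δ⌉₊ := by omega
        rw [this]
        have : ((⌈r m / δ⌉₊ : ℕ):ℝ) * δ < (r m / δ + 1) * δ :=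
          mul_lt_mul_of_pos_right hceil hδ
        calc ((⌈r m / δ⌉₊ : ℕ):ℝ) * δ ≤ (r m / δ + 1) * δ := this.le
          _ = r m + δ := by field_simp
    obtain ⟨d, hd0, hdn, hdmem, hdstep⟩ := isDisc_subdiv hlast (by omega : 0 < n)
    refine ⟨N + n, fun j => if j ≤ N then e j else d (j - N),
      fun j => if j < N then ρ j else r m / (n:ℝ), ?_, ?_, ?_, ?_, ?_, ?_⟩
    · simp [he0, Nat.zero_le]
    · have h1 : ¬ (N + n ≤ N) := by omega
      simp only [if_neg h1]
      rw [show N + n - N = n by omega, hdn]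
    · intro j hj
      by_cases h1 : j ≤ N
      · simp only [if_pos h1]; exact hemem j h1
      · simp only [if_neg h1]; exact hdmem (j - N) (by omega)
    · intro j hj
      rcases lt_trichotomy j N with h1 | h1 | h1
      · simp only [if_pos h1, if_pos h1.le, if_pos (by omega : j + 1 ≤ N)]
        obtain ⟨ha, hb, hc⟩ := hestep j h1
        exact ⟨ha, hb, hc⟩
      · subst h1
        simp only [if_neg (lt_irrefl j), if_pos (le_refl j), if_neg (by omega : ¬ j + 1 ≤ j)]
        rw [show j + 1 - j = 1 by omega]
        refine ⟨?_, hpiece0, hpiece_le⟩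
        have := hdstep 0 (by omega)
        rw [hd0, ← heN] at this
        exact this
      · simp only [if_neg (by omega : ¬ j < N), if_neg (by omega : ¬ j ≤ N),
          if_neg (by omega : ¬ j + 1 ≤ N)]
        rw [show j + 1 - N = (j - N) + 1 by omega]
        exact ⟨hdstep (j - N) (by omega), hpiece0, hpiece_le⟩
    · rw [Finset.sum_range_add, Finset.sum_range_succ]
      have e1 : ∑ j ∈ Finset.range N, (if j < N then ρ j else r m / (n:ℝ)) =
          ∑ j ∈ Finset.range N, ρ j := by
        apply Finset.sum_congr rfl
        intro j hj
        rw [Finset.mem_range] at hj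
        rw [if_pos hj]
      have e2 : ∑ j ∈ Finset.range n, (if N + j < N then ρ (N + j) else r m / (n:ℝ)) =
          ∑ j ∈ Finset.range n, r m / (n:ℝ) := by
        apply Finset.sum_congr rfl
        intro j hj
        rw [if_neg (by omega)]
      rw [e1, e2, hesum, Finset.sum_const, Finset.card_range, nsmul_eq_mul]
      field_simp
    · push_cast
      rw [Finset.sum_range_succ]
      have : ((N:ℝ) + (n:ℝ)) * δ = (N:ℝ) * δ + (n:ℝ) * δ := by ring
      rw [this]
      push_cast at heNδ
      linarith

/-! ### near-optimal witness chains and midpoints -/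

lemma exists_disc_chain {D : Set E} {z w : E} (hz : z ∈ D) (hw : w ∈ D)
    (hne : ∀ x ∈ D, ∀ y ∈ D, ∃ r, IsDisc D x y r) {ε : ℝ} (hε : 0 < ε) :
    ∃ (m : ℕ) (c : ℕ → E) (r : ℕ → ℝ), c 0 = z ∧ c m = w ∧ (∀ i ≤ m, c i ∈ D) ∧
      (∀ i < m, IsDisc D (c i) (c (i+1)) (r i)) ∧
      (∑ i ∈ Finset.range m, r i) < kobayashi D z w + ε := by
  obtain ⟨R, ⟨m, c, h0, hm, hmem, hRsum⟩, hRlt⟩ :=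
    Real.lt_sInf_add_pos (kobayashi_chains_nonempty hz hw) (half_pos hε)
  have hR : R < kobayashi D z w + ε/2 := hRlt
  have hη : 0 < ε/(2*((m:ℝ)+1)) := by positivity
  have H : ∀ i, ∃ rr : ℝ, i < m → (IsDisc D (c i) (c (i+1)) rr ∧
      rr < lempert D (c i) (c (i+1)) + ε/(2*((m:ℝ)+1))) := by
    intro i
    by_cases hi : i < m
    · obtain ⟨rr, h1, h2⟩ := isDisc_lt
        (hne (c i) (hmem i hi.le) (c (i+1)) (hmem (i+1) (by omega))) hη
      exact ⟨rr, fun _ => ⟨h1, h2⟩⟩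
    · exact ⟨0, fun h => absurd h hi⟩
  choose r hr using H
  refine ⟨m, c, r, h0, hm, hmem, fun i hi => (hr i hi).1, ?_⟩
  have hsum : ∑ i ∈ Finset.range m, r i ≤
      (∑ i ∈ Finset.range m, lempert D (c i) (c (i+1))) + (m:ℝ) * (ε/(2*((m:ℝ)+1))) := by
    have h1 : ∑ i ∈ Finset.range m, r i ≤
        ∑ i ∈ Finset.range m, (lempert D (c i) (c (i+1)) + ε/(2*((m:ℝ)+1))) :=
      Finset.sum_le_sum (fun i hi => ((hr i (Finset.mem_range.1 hi)).2).le)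
    rw [Finset.sum_add_distrib, Finset.sum_const, Finset.card_range, nsmul_eq_mul] at h1
    exact h1
  have hmη : (m:ℝ) * (ε/(2*((m:ℝ)+1))) ≤ ε/2 := by
    have hm1 : (0:ℝ) < (m:ℝ) + 1 := by positivity
    have heq : (m:ℝ) * (ε/(2*((m:ℝ)+1))) = ((m:ℝ)/((m:ℝ)+1)) * (ε/2) := by
      rw [div_mul_div_comm, mul_comm ((m:ℝ)+1) 2, mul_div_assoc]
    have h1 : (m:ℝ)/((m:ℝ)+1) ≤ 1 := by rw [div_le_one hm1]; linarith
    rw [heq]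
    calc ((m:ℝ)/((m:ℝ)+1)) * (ε/2) ≤ 1 * (ε/2) :=
          mul_le_mul_of_nonneg_right h1 (by positivity)
      _ = ε/2 := one_mul _
  have hRs : ∑ i ∈ Finset.range m, lempert D (c i) (c (i+1)) = R := hRsum.symm
  linarith

lemma kobayashi_midpoint {D : Set E} {z w : E} (hz : z ∈ D) (hw : w ∈ D)
    (hne : ∀ x ∈ D, ∀ y ∈ D, ∃ r, IsDisc D x y r) {ε : ℝ} (hε : 0 < ε) :
    ∃ u ∈ D, kobayashi D z u ≤ kobayashi D z w / 2 + ε ∧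
      kobayashi D u w ≤ kobayashi D z w / 2 + ε := by
  classical
  obtain ⟨m, c, r, h0, hm, hmem, hdisc, hS⟩ := exists_disc_chain hz hw hne (half_pos hε)
  obtain ⟨N, e, ρ, he0, heN, hemem, hestep, hesum, -⟩ :=
    chain_refine m c r hdisc (h0 ▸ hz) (δ := ε/2) (by positivity)
  set T := ∑ j ∈ Finset.range N, ρ j with hT
  have hT0 : 0 ≤ T := Finset.sum_nonneg (fun j hj => (hestep j (Finset.mem_range.1 hj)).2.1)
  have hTk : T < kobayashi D z w + ε/2 := by rw [hesum]; exact hS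
  set P : ℕ → ℝ := fun j => ∑ i ∈ Finset.range j, ρ i with hP
  have hPN : P N = T := rfl
  have hex : ∃ j, T/2 ≤ P j := ⟨N, by rw [hPN]; linarith⟩
  set j := Nat.find hex with hjdef
  have hj : T/2 ≤ P j := Nat.find_spec hex
  have hjN : j ≤ N := Nat.find_le (by rw [hPN]; linarith)
  have hPj : P j ≤ T/2 + ε/2 := by
    rcases Nat.eq_zero_or_pos j with hj0 | hj0
    · rw [hj0]
      simp only [hP, Finset.range_zero, Finset.sum_empty]
      linarith
    · obtain ⟨j', hj'⟩ : ∃ j', j = j' + 1 := ⟨j - 1, by omega⟩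
      have hmin : ¬ T/2 ≤ P j' := Nat.find_min hex (by omega)
      push_neg at hmin
      have hρ : ρ j' ≤ ε/2 := (hestep j' (by omega)).2.2
      have hPs : P j = P j' + ρ j' := by rw [hj']; exact Finset.sum_range_succ ρ j'
      rw [hPs]
      linarith
  have he0z : e 0 = z := by rw [he0, h0]
  have heNw : e N = w := by rw [heN, hm]
  refine ⟨e j, hemem j hjN, ?_, ?_⟩
  · have hchain := kobayashi_le_chain (D := D) (z := z) (w := e j) (m := j) (c := e)
      he0z rfl (fun i hi => hemem i (le_trans hi hjN))
    have hle : ∑ i ∈ Finset.range j, lempert D (e i) (e (i+1)) ≤ P j :=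
      Finset.sum_le_sum fun i hi =>
        lempert_le (hestep i (lt_of_lt_of_le (Finset.mem_range.1 hi) hjN)).1
    calc kobayashi D z (e j) ≤ P j := le_trans hchain hle
      _ ≤ T/2 + ε/2 := hPj
      _ ≤ kobayashi D z w / 2 + ε := by linarith
  · have hchain := kobayashi_le_chain (D := D) (z := e j) (w := w) (m := N - j)
      (c := fun i => e (j + i)) (by simp)
      (by show e (j + (N - j)) = w; rw [show j + (N - j) = N by omega, heNw])
      (fun i hi => hemem (j + i) (by omega))
    have hsplit := Finset.sum_range_add ρ j (N - j)
    rw [show j + (N - j) = N by omega] at hsplit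
    have hle : ∑ i ∈ Finset.range (N - j), lempert D (e (j + i)) (e (j + i + 1)) ≤
        ∑ i ∈ Finset.range (N - j), ρ (j + i) := by
      apply Finset.sum_le_sum
      intro i hi
      rw [Finset.mem_range] at hi
      exact lempert_le (hestep (j + i) (by omega)).1
    have hsum2 : ∑ i ∈ Finset.range (N - j), ρ (j + i) = T - P j := by
      rw [hT]
      rw [hsplit]
      simp only [hP]
      ring
    calc kobayashi D (e j) w
        ≤ ∑ i ∈ Finset.range (N - j), lempert D (e (j + i)) (e (j + i + 1)) := hchain
      _ ≤ T - P j := by rw [← hsum2]; exact hle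
      _ ≤ T/2 := by linarith
      _ ≤ kobayashi D z w / 2 + ε := by linarith

/-! ### product discs -/

lemma isDisc_swap {D1 : Set E} {D2 : Set F} {a a' : E} {b b' : F} {r : ℝ}
    (h : IsDisc (D2 ×ˢ D1) (b, a) (b', a') r) : IsDisc (D1 ×ˢ D2) (a, b) (a', b') r := by
  obtain ⟨α, hα, ⟨φ, hd, hm, h0, hαv⟩, hr⟩ := h
  refine ⟨α, hα, ⟨fun ζ => ((φ ζ).2, (φ ζ).1), hd.snd.prodMk hd.fst,
    fun ζ hζ => ⟨(hm hζ).2, (hm hζ).1⟩, ?_, ?_⟩, hr⟩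
  · show ((φ 0).2, (φ 0).1) = (a, b)
    rw [h0]
  · show ((φ α).2, (φ α).1) = (a', b')
    rw [hαv]

lemma isDisc_prod_le {D1 : Set E} {D2 : Set F} {a a' : E} {b b' : F} {r s : ℝ}
    (h1 : IsDisc D1 a a' r) (h2 : IsDisc D2 b b' s) (hrs : r ≤ s) :
    IsDisc (D1 ×ˢ D2) (a, b) (a', b') s := by
  obtain ⟨α1, hα1, ⟨φ1, hd1, hm1, h10, h1α⟩, hr⟩ := h1
  obtain ⟨α2, hα2, ⟨φ2, hd2, hm2, h20, h2α⟩, hs⟩ := h2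
  have hαle : ‖α1‖ ≤ ‖α2‖ := by
    by_contra hcon
    push_neg at hcon
    have := artanh_lt_artanh (norm_nonneg α2) hcon hα1
    rw [← hr, ← hs] at this
    linarith
  by_cases hα20 : α2 = 0
  · subst hα20
    have hα10 : α1 = 0 := by
      rw [← norm_eq_zero]
      have := norm_nonneg α1
      simpa using le_antisymm (by simpa using hαle) (norm_nonneg α1)
    subst hα10
    refine ⟨0, by simp, ⟨fun ζ => (φ1 ζ, φ2 ζ), hd1.prodMk hd2,
      fun ζ hζ => ⟨hm1 hζ, hm2 hζ⟩, ?_, ?_⟩, hs⟩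
    · show (φ1 0, φ2 0) = (a, b)
      rw [h10, h20]
    · show (φ1 0, φ2 0) = (a', b')
      rw [h1α, h2α]
  · refine ⟨α2, hα2, ⟨fun ζ => (φ1 (α1/α2 * ζ), φ2 ζ), ?_, ?_, ?_, ?_⟩, hs⟩
    · apply DifferentiableOn.prodMk
      · apply hd1.comp (((differentiable_const (α1/α2)).mul differentiable_id).differentiableOn)
        intro ζ hζ
        rw [mem_ball_zero_iff] at hζ ⊢
        show ‖α1 / α2 * ζ‖ < 1
        rw [norm_mul, norm_div]
        have hα2pos : 0 < ‖α2‖ := norm_pos_iff.2 hα20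
        have : ‖α1‖/‖α2‖ ≤ 1 := div_le_one_of_le₀ hαle (norm_nonneg _)
        calc ‖α1‖/‖α2‖ * ‖ζ‖ ≤ 1 * ‖ζ‖ :=
              mul_le_mul_of_nonneg_right this (norm_nonneg _)
          _ = ‖ζ‖ := one_mul _
          _ < 1 := hζ
      · exact hd2
    · intro ζ hζ
      rw [mem_ball_zero_iff] at hζ
      refine ⟨hm1 ?_, hm2 (mem_ball_zero_iff.2 hζ)⟩
      rw [mem_ball_zero_iff, norm_mul, norm_div]
      have : ‖α1‖/‖α2‖ ≤ 1 := div_le_one_of_le₀ hαle (norm_nonneg _)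
      calc ‖α1‖/‖α2‖ * ‖ζ‖ ≤ 1 * ‖ζ‖ := mul_le_mul_of_nonneg_right this (norm_nonneg _)
        _ = ‖ζ‖ := one_mul _
        _ < 1 := hζ
    · show (φ1 (α1/α2 * 0), φ2 0) = (a, b)
      rw [mul_zero, h10, h20]
    · show (φ1 (α1/α2 * α2), φ2 α2) = (a', b')
      rw [div_mul_cancel₀ _ hα20, h1α, h2α]

lemma isDisc_prod {D1 : Set E} {D2 : Set F} {a a' : E} {b b' : F} {r s : ℝ}
    (h1 : IsDisc D1 a a' r) (h2 : IsDisc D2 b b' s) :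
    IsDisc (D1 ×ˢ D2) (a, b) (a', b') (max r s) := by
  rcases le_total r s with h | h
  · rw [max_eq_right h]
    exact isDisc_prod_le h1 h2 h
  · rw [max_eq_left h]
    exact isDisc_swap (isDisc_prod_le h2 h1 h)

lemma kobayashi_proj_fst {D1 : Set E} {D2 : Set F}
    (hne1 : ∀ x ∈ D1, ∀ y ∈ D1, ∃ r, IsDisc D1 x y r)
    (hne2 : ∀ x ∈ D2, ∀ y ∈ D2, ∃ r, IsDisc D2 x y r)
    {p q : E × F} (hp : p ∈ D1 ×ˢ D2) (hq : q ∈ D1 ×ˢ D2) :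
    kobayashi D1 p.1 q.1 ≤ kobayashi (D1 ×ˢ D2) p q := by
  apply le_csInf (kobayashi_chains_nonempty hp hq)
  rintro R ⟨m, c, h0, hm, hmem, rfl⟩
  have hchain := kobayashi_le_chain (D := D1) (z := p.1) (w := q.1) (m := m)
    (c := fun i => (c i).1) (by show (c 0).1 = p.1; rw [h0]) (by show (c m).1 = q.1; rw [hm])
    (fun i hi => (hmem i hi).1)
  refine le_trans hchain (Finset.sum_le_sum ?_)
  intro i hi
  rw [Finset.mem_range] at hi
  apply le_csInf
  · obtain ⟨r1, hd1⟩ := hne1 _ (hmem i hi.le).1 _ (hmem (i+1) (by omega)).1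
    obtain ⟨r2, hd2⟩ := hne2 _ (hmem i hi.le).2 _ (hmem (i+1) (by omega)).2
    have := isDisc_prod hd1 hd2
    exact ⟨max r1 r2, by simpa [IsDisc] using this⟩
  · rintro R2 ⟨α, hα, ⟨φ, hd, hmm, hφ0, hφα⟩, hR2⟩
    apply lempert_le
    exact ⟨α, hα, ⟨fun ζ => (φ ζ).1, hd.fst, fun ζ hζ => (hmm hζ).1,
      by show (φ 0).1 = (c i).1; rw [hφ0], by show (φ α).1 = (c (i+1)).1; rw [hφα]⟩, hR2⟩

lemma kobayashi_proj_snd {D1 : Set E} {D2 : Set F}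
    (hne1 : ∀ x ∈ D1, ∀ y ∈ D1, ∃ r, IsDisc D1 x y r)
    (hne2 : ∀ x ∈ D2, ∀ y ∈ D2, ∃ r, IsDisc D2 x y r)
    {p q : E × F} (hp : p ∈ D1 ×ˢ D2) (hq : q ∈ D1 ×ˢ D2) :
    kobayashi D2 p.2 q.2 ≤ kobayashi (D1 ×ˢ D2) p q := by
  apply le_csInf (kobayashi_chains_nonempty hp hq)
  rintro R ⟨m, c, h0, hm, hmem, rfl⟩
  have hchain := kobayashi_le_chain (D := D2) (z := p.2) (w := q.2) (m := m)
    (c := fun i => (c i).2) (by show (c 0).2 = p.2; rw [h0]) (by show (c m).2 = q.2; rw [hm])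
    (fun i hi => (hmem i hi).2)
  refine le_trans hchain (Finset.sum_le_sum ?_)
  intro i hi
  rw [Finset.mem_range] at hi
  apply le_csInf
  · obtain ⟨r1, hd1⟩ := hne1 _ (hmem i hi.le).1 _ (hmem (i+1) (by omega)).1
    obtain ⟨r2, hd2⟩ := hne2 _ (hmem i hi.le).2 _ (hmem (i+1) (by omega)).2
    have := isDisc_prod hd1 hd2
    exact ⟨max r1 r2, by simpa [IsDisc] using this⟩
  · rintro R2 ⟨α, hα, ⟨φ, hd, hmm, hφ0, hφα⟩, hR2⟩
    apply lempert_le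
    exact ⟨α, hα, ⟨fun ζ => (φ ζ).2, hd.snd, fun ζ hζ => (hmm hζ).2,
      by show (φ 0).2 = (c i).2; rw [hφ0], by show (φ α).2 = (c (i+1)).2; rw [hφα]⟩, hR2⟩

set_option maxHeartbeats 1000000 in
lemma kobayashi_prod_le {D1 : Set E} {D2 : Set F} {a a' : E} {b b' : F}
    (ha : a ∈ D1) (ha' : a' ∈ D1) (hb : b ∈ D2) (hb' : b' ∈ D2)
    (hne1 : ∀ x ∈ D1, ∀ y ∈ D1, ∃ r, IsDisc D1 x y r)
    (hne2 : ∀ x ∈ D2, ∀ y ∈ D2, ∃ r, IsDisc D2 x y r)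
    {ε : ℝ} (hε : 0 < ε) :
    kobayashi (D1 ×ˢ D2) (a, b) (a', b') ≤
      max (kobayashi D1 a a') (kobayashi D2 b b') + ε := by
  obtain ⟨m1, c1, r1, hc10, hc1m, hc1mem, hc1disc, hS1⟩ :=
    exists_disc_chain ha ha' hne1 (show (0:ℝ) < ε/4 by positivity)
  obtain ⟨m2, c2, r2, hc20, hc2m, hc2mem, hc2disc, hS2⟩ :=
    exists_disc_chain hb hb' hne2 (show (0:ℝ) < ε/4 by positivity)
  set δ : ℝ := ε/(4*((m1:ℝ)+(m2:ℝ)+1)) with hδdef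
  have hδ : 0 < δ := by positivity
  obtain ⟨N1, e1, ρ1, he10, he1N, he1mem, he1step, he1sum, he1δ⟩ :=
    chain_refine m1 c1 r1 hc1disc (hc10 ▸ ha) hδ
  obtain ⟨N2, e2, ρ2, he20, he2N, he2mem, he2step, he2sum, he2δ⟩ :=
    chain_refine m2 c2 r2 hc2disc (hc20 ▸ hb) hδ
  set N := max N1 N2 with hN
  set E1 : ℕ → E := fun j => e1 (min j N1) with hE1
  set E2 : ℕ → F := fun j => e2 (min j N2) with hE2
  set P1 : ℕ → ℝ := fun j => if j < N1 then ρ1 j else 0 with hP1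
  set P2 : ℕ → ℝ := fun j => if j < N2 then ρ2 j else 0 with hP2
  have hstep1 : ∀ j < N, IsDisc D1 (E1 j) (E1 (j+1)) (P1 j) ∧ 0 ≤ P1 j ∧ P1 j ≤ δ := by
    intro j hj
    by_cases h : j < N1
    · have := he1step j h
      simp only [hE1, hP1, if_pos h, min_eq_left (by omega : j ≤ N1),
        min_eq_left (by omega : j + 1 ≤ N1)]
      exact this
    · simp only [hE1, hP1, if_neg h, min_eq_right (by omega : N1 ≤ j),
        min_eq_right (by omega : N1 ≤ j + 1)]
      exact ⟨isDisc_self (he1mem N1 le_rfl), le_refl 0, hδ.le⟩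
  have hstep2 : ∀ j < N, IsDisc D2 (E2 j) (E2 (j+1)) (P2 j) ∧ 0 ≤ P2 j ∧ P2 j ≤ δ := by
    intro j hj
    by_cases h : j < N2
    · have := he2step j h
      simp only [hE2, hP2, if_pos h, min_eq_left (by omega : j ≤ N2),
        min_eq_left (by omega : j + 1 ≤ N2)]
      exact this
    · simp only [hE2, hP2, if_neg h, min_eq_right (by omega : N2 ≤ j),
        min_eq_right (by omega : N2 ≤ j + 1)]
      exact ⟨isDisc_self (he2mem N2 le_rfl), le_refl 0, hδ.le⟩
  have hchain := kobayashi_le_chain (D := D1 ×ˢ D2) (z := (a, b)) (w := (a', b')) (m := N)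
    (c := fun j => (E1 j, E2 j))
    (by show (e1 (min 0 N1), e2 (min 0 N2)) = (a, b)
        rw [Nat.zero_min, Nat.zero_min, he10, he20, hc10, hc20])
    (by show (e1 (min N N1), e2 (min N N2)) = (a', b')
        rw [min_eq_right (le_max_left N1 N2), min_eq_right (le_max_right N1 N2),
          he1N, he2N, hc1m, hc2m])
    (by intro j hj
        exact ⟨he1mem _ (min_le_right _ _), he2mem _ (min_le_right _ _)⟩)
  have hsumle : ∑ j ∈ Finset.range N, lempert (D1 ×ˢ D2) (E1 j, E2 j) (E1 (j+1), E2 (j+1)) ≤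
      (N:ℝ) * δ := by
    have h1 : ∀ j ∈ Finset.range N,
        lempert (D1 ×ˢ D2) (E1 j, E2 j) (E1 (j+1), E2 (j+1)) ≤ δ := by
      intro j hj
      rw [Finset.mem_range] at hj
      obtain ⟨hd1, h01, hδ1⟩ := hstep1 j hj
      obtain ⟨hd2, h02, hδ2⟩ := hstep2 j hj
      calc lempert (D1 ×ˢ D2) (E1 j, E2 j) (E1 (j+1), E2 (j+1)) ≤ max (P1 j) (P2 j) :=
            lempert_le (isDisc_prod hd1 hd2)
        _ ≤ δ := max_le hδ1 hδ2
    calc ∑ j ∈ Finset.range N, lempert (D1 ×ˢ D2) (E1 j, E2 j) (E1 (j+1), E2 (j+1))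
        ≤ ∑ _j ∈ Finset.range N, δ := Finset.sum_le_sum h1
      _ = (N:ℝ) * δ := by rw [Finset.sum_const, Finset.card_range, nsmul_eq_mul]
  have hNδ : (N:ℝ) * δ ≤ max (kobayashi D1 a a') (kobayashi D2 b b') + ε := by
    have hNc : (N:ℝ) = max ((N1:ℝ)) ((N2:ℝ)) := by
      rw [hN]; push_cast [Nat.cast_max]; rfl
    have hbound1 : (N1:ℝ) * δ ≤ kobayashi D1 a a' + ε/4 + (m1:ℝ) * δ := by
      have := he1δ
      linarith [hS1]
    have hbound2 : (N2:ℝ) * δ ≤ kobayashi D2 b b' + ε/4 + (m2:ℝ) * δ := by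
      have := he2δ
      linarith [hS2]
    have hmδ : ((m1:ℝ) + (m2:ℝ)) * δ ≤ ε/4 := by
      rw [hδdef]
      have h1 : (m1:ℝ) + (m2:ℝ) ≤ (m1:ℝ) + (m2:ℝ) + 1 := by linarith
      have h2 : (0:ℝ) < (m1:ℝ) + (m2:ℝ) + 1 := by positivity
      rw [mul_div_assoc']
      rw [div_le_div_iff₀ (by positivity) (by norm_num : (0:ℝ) < 4)]
      nlinarith [Nat.cast_nonneg (α := ℝ) m1, Nat.cast_nonneg (α := ℝ) m2, hε]
    have hm1δ : (m1:ℝ) * δ ≤ ε/4 := by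
      nlinarith [Nat.cast_nonneg (α := ℝ) m2, hδ]
    have hm2δ : (m2:ℝ) * δ ≤ ε/4 := by
      nlinarith [Nat.cast_nonneg (α := ℝ) m1, hδ]
    rw [hNc]
    rcases max_cases ((N1:ℝ)) ((N2:ℝ)) with ⟨hEq, -⟩ | ⟨hEq, -⟩ <;> rw [hEq]
    · calc (N1:ℝ) * δ ≤ kobayashi D1 a a' + ε/4 + ε/4 := by linarith
        _ ≤ max (kobayashi D1 a a') (kobayashi D2 b b') + ε := by
            have := le_max_left (kobayashi D1 a a') (kobayashi D2 b b')
            linarith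
    · calc (N2:ℝ) * δ ≤ kobayashi D2 b b' + ε/4 + ε/4 := by linarith
        _ ≤ max (kobayashi D1 a a') (kobayashi D2 b b') + ε := by
            have := le_max_right (kobayashi D1 a a') (kobayashi D2 b b')
            linarith
  exact le_trans hchain (le_trans hsumle hNδ)

/-! ### lower bound via holomorphic functions to the disc -/

lemma kobayashi_ge_rho {D : Set E} {g : E → ℂ} (hgd : DifferentiableOn ℂ g D)
    (hgm : MapsTo g D (ball 0 1)) (hne : ∀ x ∈ D, ∀ y ∈ D, ∃ r, IsDisc D x y r)
    {z w : E} (hz : z ∈ D) (hw : w ∈ D) :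
    rho (g z) (g w) ≤ kobayashi D z w := by
  have hball : ∀ x ∈ D, ‖g x‖ < 1 := fun x hx => mem_ball_zero_iff.1 (hgm hx)
  apply le_csInf (kobayashi_chains_nonempty hz hw)
  rintro R ⟨m, c, h0, hm, hmem, rfl⟩
  have step : ∀ i < m, rho (g (c i)) (g (c (i+1))) ≤ lempert D (c i) (c (i+1)) := by
    intro i hi
    apply le_csInf (hne _ (hmem i hi.le) _ (hmem (i+1) hi))
    rintro r ⟨α, hα, ⟨φ, hd, hmm, hφ0, hφα⟩, rfl⟩
    have hsp := schwarz_pick (h := fun ζ => g (φ ζ)) (hgd.comp hd hmm)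
      (fun ζ hζ => hgm (hmm hζ)) (a := 0) (b := α) (by simp) hα
    have h1 : md (g (φ 0)) (g (φ α)) ≤ md 0 α := hsp
    rw [hφ0, hφα, md_zero_left] at h1
    have h2 : md (g (c i)) (g (c (i+1))) < 1 :=
      md_lt_one (hball _ (hmem i hi.le)) (hball _ (hmem (i+1) hi))
    exact artanh_le_artanh (md_nonneg _ _) h1 hα
  have tel : ∀ k ≤ m, rho (g (c 0)) (g (c k)) ≤
      ∑ i ∈ Finset.range k, rho (g (c i)) (g (c (i+1))) := by
    intro k
    induction k with
    | zero =>
      intro _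
      simp [rho, md_self, artanh_zero]
    | succ k IH =>
      intro hk
      have h1 := IH (by omega)
      have h2 := rho_triangle (hball _ (hmem 0 (Nat.zero_le _))) (hball _ (hmem k (by omega)))
        (hball _ (hmem (k+1) hk))
      rw [Finset.sum_range_succ]
      linarith
  have := tel m le_rfl
  rw [h0, hm] at this
  calc rho (g z) (g w) ≤ ∑ i ∈ Finset.range m, rho (g (c i)) (g (c (i+1))) := this
    _ ≤ ∑ i ∈ Finset.range m, lempert D (c i) (c (i+1)) :=
        Finset.sum_le_sum (fun i hi => step i (Finset.mem_range.1 hi))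

set_option maxHeartbeats 1000000 in
lemma kobayashi_unbounded {D : Set E} (hopen : IsOpen D) (hconn : IsConnected D)
    (hne : ∀ x ∈ D, ∀ y ∈ D, ∃ r, IsDisc D x y r)
    (f : E → ℂ) (hfd : DifferentiableOn ℂ f D) (C : ℝ) (hC : ∀ z ∈ D, ‖f z‖ ≤ C)
    (hfnc : ¬ (∀ z ∈ D, ∀ w ∈ D, f z = f w)) (R : ℝ) (hR : 0 < R) :
    ∃ z ∈ D, ∃ w ∈ D, R ≤ kobayashi D z w := by
  set S := (fun x => ‖f x‖) '' D with hSdef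
  have hSne : S.Nonempty := hconn.nonempty.image _
  have hSbdd : BddAbove S := ⟨C, by rintro y ⟨x, hx, rfl⟩; exact hC x hx⟩
  set M := sSup S with hM
  have hle : ∀ x ∈ D, ‖f x‖ ≤ M := fun x hx => le_csSup hSbdd ⟨x, hx, rfl⟩
  have hlt : ∀ x ∈ D, ‖f x‖ < M := by
    intro x hx
    rcases lt_or_eq_of_le (hle x hx) with h | h
    · exact h
    · exfalso
      have hmax : IsMaxOn (norm ∘ f) D x := by
        intro y hy
        show ‖f y‖ ≤ ‖f x‖
        calc ‖f y‖ ≤ M := hle y hy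
          _ = ‖f x‖ := h.symm
      have heq := Complex.eqOn_of_isPreconnected_of_isMaxOn_norm hconn.isPreconnected
        hopen hfd hx hmax
      apply hfnc
      intro z hz w hw
      rw [heq hz, heq hw]
      rfl
  obtain ⟨z0, hz0⟩ := hconn.nonempty
  have hM0 : 0 < M := lt_of_le_of_lt (norm_nonneg (f z0)) (hlt z0 hz0)
  set g : E → ℂ := fun x => f x / (M:ℂ) with hg
  have hgnorm : ∀ x, ‖g x‖ = ‖f x‖ / M := by
    intro x
    rw [hg]
    simp only []
    rw [norm_div, Complex.norm_real, Real.norm_eq_abs, abs_of_pos hM0]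
  have hgd : DifferentiableOn ℂ g D := by
    rw [hg]
    simp only [div_eq_mul_inv]
    exact hfd.mul_const _
  have hgm : MapsTo g D (ball 0 1) := by
    intro x hx
    rw [mem_ball_zero_iff, hgnorm]
    rw [div_lt_one hM0]
    exact hlt x hx
  set τ := th R with hτ
  have hτ0 : 0 ≤ τ := th_nonneg hR.le
  have hτ1 : τ < 1 := th_lt_one R
  set aa := ‖g z0‖ with haa
  have haa0 : 0 ≤ aa := norm_nonneg _
  have haa1 : aa < 1 := mem_ball_zero_iff.1 (hgm hz0)
  set η := M * (1 - τ^2) * (1 - aa)^2 / 8 with hη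
  have hτsq : 0 < 1 - τ^2 := by nlinarith
  have hηpos : 0 < η := by
    rw [hη]
    have h2 : 0 < (1 - aa)^2 := pow_pos (by linarith) 2
    exact div_pos (mul_pos (mul_pos hM0 hτsq) h2) (by norm_num)
  obtain ⟨y, ⟨w, hwD, hwy⟩, hylt⟩ := exists_lt_of_lt_csSup hSne
    (show M - η < M by linarith)
  -- hylt : M - η < y = ‖f w‖
  have hfw : M - η < ‖f w‖ := by rw [← hwy] at hylt; exact hylt
  set bb := ‖g w‖ with hbb
  have hbb0 : 0 ≤ bb := norm_nonneg _
  have hbb1 : bb < 1 := mem_ball_zero_iff.1 (hgm hwD)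
  have hbbge : 1 - (1 - τ^2)*(1 - aa)^2/8 < bb := by
    rw [hbb, hgnorm]
    rw [lt_div_iff₀ hM0]
    have : (1 - (1 - τ^2)*(1 - aa)^2/8) * M = M - η := by rw [hη]; ring
    rw [this]
    exact hfw
  -- show md (g z0) (g w) ≥ τ
  have hNpos : (0:ℝ) < ‖1 - (starRingEnd ℂ) (g z0) * (g w)‖ :=
    norm_pos_iff.2 (one_sub_conj_mul_ne_zero haa1 hbb1.le)
  have hNge : 1 - aa ≤ ‖1 - (starRingEnd ℂ) (g z0) * (g w)‖ := by
    have h1 : ‖(starRingEnd ℂ) (g z0) * (g w)‖ = aa * bb := by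
      rw [norm_mul, RCLike.norm_conj]
    have h2 := norm_sub_norm_le (1:ℂ) ((starRingEnd ℂ) (g z0) * (g w))
    rw [h1, norm_one] at h2
    nlinarith
  have hkey := key_identity (g z0) (g w)
  have hmd2 : τ^2 ≤ (md (g z0) (g w))^2 := by
    have hmd : md (g z0) (g w) = ‖g z0 - g w‖ / ‖1 - (starRingEnd ℂ) (g z0) * (g w)‖ := rfl
    rw [hmd, div_pow]
    rw [le_div_iff₀ (by positivity)]
    -- τ² * N² ≤ ‖z0-w‖² = N² - (1-aa²)(1-bb²)
    have hsub : ‖g z0 - g w‖^2 =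
        ‖1 - (starRingEnd ℂ) (g z0) * (g w)‖^2 - (1 - aa^2)*(1 - bb^2) := by
      rw [← hkey]; ring
    rw [hsub]
    have hN2 : (1 - aa)^2 ≤ ‖1 - (starRingEnd ℂ) (g z0) * (g w)‖^2 := by
      nlinarith
    have hT2 : 0 ≤ 1 - τ^2 := hτsq.le
    have e1 : 1 - aa^2 ≤ 2*(1 - aa) := by nlinarith
    have e2 : 1 - bb^2 ≤ 2*(1 - bb) := by nlinarith
    have e3 : 1 - bb ≤ (1 - τ^2)*(1-aa)^2/8 := by linarith
    have step1 : (1-aa^2)*(1-bb^2) ≤ (2*(1-aa))*(2*(1-bb)) :=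
      mul_le_mul e1 e2 (by nlinarith) (by linarith)
    have step2 : (2*(1-aa))*(2*(1-bb)) ≤ (2*(1-aa))*(2*((1 - τ^2)*(1-aa)^2/8)) := by
      apply mul_le_mul_of_nonneg_left (by linarith) (by linarith)
    have step3 : (2*(1-aa))*(2*((1 - τ^2)*(1-aa)^2/8)) ≤ (1 - τ^2)*(1-aa)^2 := by
      nlinarith [mul_nonneg (mul_nonneg hT2 (sq_nonneg (1-aa))) (by linarith : (0:ℝ) ≤ 1+aa)]
    have step4 : (1 - τ^2)*(1-aa)^2 ≤ (1 - τ^2)*‖1 - (starRingEnd ℂ) (g z0) * (g w)‖^2 :=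
      mul_le_mul_of_nonneg_left hN2 hT2
    have heqr : ‖1 - (starRingEnd ℂ) (g z0) * (g w)‖^2
        - (1 - τ^2)*‖1 - (starRingEnd ℂ) (g z0) * (g w)‖^2
        = τ^2 * ‖1 - (starRingEnd ℂ) (g z0) * (g w)‖^2 := by ring
    linarith
  have hmdτ : τ ≤ md (g z0) (g w) := by
    by_contra hcon
    push_neg at hcon
    have h2 : (md (g z0) (g w))^2 < τ^2 := pow_lt_pow_left₀ hcon (md_nonneg _ _) two_ne_zero
    linarith
  have hmd1 : md (g z0) (g w) < 1 := md_lt_one haa1 hbb1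
  refine ⟨z0, hz0, w, hwD, ?_⟩
  calc R = artanh τ := (artanh_th R).symm
    _ ≤ artanh (md (g z0) (g w)) := artanh_le_artanh hτ0 hmdτ hmd1
    _ = rho (g z0) (g w) := rfl
    _ ≤ kobayashi D z0 w := kobayashi_ge_rho hgd hgm hne hz0 hwD

end KobAux
end

/-- **Corollary 3.** If `D₁ ⊆ ℂⁿ` and `D₂ ⊆ ℂᵐ` are Kobayashi hyperbolic domains
admitting non-constant bounded holomorphic functions, then the product domain
`D₁ × D₂ ⊆ ℂ^{n+m}` is not Gromov hyperbolic with respect to its Kobayashi distance. -/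
theorem product_domain_not_gromov_kobayashi_hyperbolic
    {n m : ℕ}
    (D₁ : Set (EuclideanSpace ℂ (Fin n))) (D₂ : Set (EuclideanSpace ℂ (Fin m)))
    (h₁open : IsOpen D₁) (h₁conn : IsConnected D₁)
    (h₂open : IsOpen D₂) (h₂conn : IsConnected D₂)
    (h₁hyp : ∀ z ∈ D₁, ∀ w ∈ D₁, z ≠ w → 0 < kobayashi D₁ z w)
    (h₂hyp : ∀ z ∈ D₂, ∀ w ∈ D₂, z ≠ w → 0 < kobayashi D₂ z w)
    (h₁bdd : ∃ f : EuclideanSpace ℂ (Fin n) → ℂ, DifferentiableOn ℂ f D₁ ∧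
      (∃ C : ℝ, ∀ z ∈ D₁, ‖f z‖ ≤ C) ∧ ¬ (∀ z ∈ D₁, ∀ w ∈ D₁, f z = f w))
    (h₂bdd : ∃ f : EuclideanSpace ℂ (Fin m) → ℂ, DifferentiableOn ℂ f D₂ ∧
      (∃ C : ℝ, ∀ z ∈ D₂, ‖f z‖ ≤ C) ∧ ¬ (∀ z ∈ D₂, ∀ w ∈ D₂, f z = f w)) :
    ¬ GromovHyperbolicWith (D₁ ×ˢ D₂) (kobayashi (D₁ ×ˢ D₂)) := by
  classical
  rintro ⟨C, hC⟩
  have hne1 : ∀ x ∈ D₁, ∀ y ∈ D₁, ∃ r, KobAux.IsDisc D₁ x y r := by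
    intro x hx y hy
    by_cases hxy : x = y
    · exact ⟨0, hxy ▸ KobAux.isDisc_self hx⟩
    · by_contra hcon
      push_neg at hcon
      have hemp : {r : ℝ | KobAux.IsDisc D₁ x y r} = ∅ := by
        ext r
        simp only [mem_setOf_eq, mem_empty_iff_false, iff_false]
        exact hcon r
      have hl0 : lempert D₁ x y = 0 := by
        rw [KobAux.lempert_eq, hemp, Real.sInf_empty]
      have hk := KobAux.kobayashi_le_lempert hx hy
      rw [hl0] at hk
      exact absurd (h₁hyp x hx y hy hxy) (not_lt.2 hk)
  have hne2 : ∀ x ∈ D₂, ∀ y ∈ D₂, ∃ r, KobAux.IsDisc D₂ x y r := by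
    intro x hx y hy
    by_cases hxy : x = y
    · exact ⟨0, hxy ▸ KobAux.isDisc_self hx⟩
    · by_contra hcon
      push_neg at hcon
      have hemp : {r : ℝ | KobAux.IsDisc D₂ x y r} = ∅ := by
        ext r
        simp only [mem_setOf_eq, mem_empty_iff_false, iff_false]
        exact hcon r
      have hl0 : lempert D₂ x y = 0 := by
        rw [KobAux.lempert_eq, hemp, Real.sInf_empty]
      have hk := KobAux.kobayashi_le_lempert hx hy
      rw [hl0] at hk
      exact absurd (h₂hyp x hx y hy hxy) (not_lt.2 hk)
  set R : ℝ := max C 0 + 20 with hR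
  have hRpos : 0 < R := by
    have := le_max_right C 0
    rw [hR]; linarith
  obtain ⟨f1, hf1d, ⟨C1, hC1⟩, hf1nc⟩ := h₁bdd
  obtain ⟨f2, hf2d, ⟨C2, hC2⟩, hf2nc⟩ := h₂bdd
  obtain ⟨z1, hz1, w1, hw1, hRk1⟩ :=
    KobAux.kobayashi_unbounded h₁open h₁conn hne1 f1 hf1d C1 hC1 hf1nc R hRpos
  obtain ⟨z2, hz2, w2, hw2, hRk2⟩ :=
    KobAux.kobayashi_unbounded h₂open h₂conn hne2 f2 hf2d C2 hC2 hf2nc R hRpos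
  obtain ⟨u1, hu1, hu1a, hu1b⟩ := KobAux.kobayashi_midpoint hz1 hw1 hne1 one_pos
  obtain ⟨u2, hu2, hu2a, hu2b⟩ := KobAux.kobayashi_midpoint hz2 hw2 hne2 one_pos
  set s1 : ℝ := kobayashi D₁ z1 w1 / 2 with hs1
  set s2 : ℝ := kobayashi D₂ z2 w2 / 2 with hs2
  have hs1R : R ≤ 2 * s1 := by rw [hs1]; linarith
  have hs2R : R ≤ 2 * s2 := by rw [hs2]; linarith
  have htri1 := KobAux.kobayashi_triangle hz1 hu1 hw1
  have htri2 := KobAux.kobayashi_triangle hz2 hu2 hw2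
  have hl1a : s1 - 1 ≤ kobayashi D₁ z1 u1 := by linarith
  have hl1b : s1 - 1 ≤ kobayashi D₁ u1 w1 := by linarith
  have hl2a : s2 - 1 ≤ kobayashi D₂ z2 u2 := by linarith
  have hl2b : s2 - 1 ≤ kobayashi D₂ u2 w2 := by linarith
  have hp : ((z1, u2) : EuclideanSpace ℂ (Fin n) × EuclideanSpace ℂ (Fin m)) ∈ D₁ ×ˢ D₂ :=
    Set.mem_prod.mpr ⟨hz1, hu2⟩
  have hq : ((w1, u2) : EuclideanSpace ℂ (Fin n) × EuclideanSpace ℂ (Fin m)) ∈ D₁ ×ˢ D₂ :=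
    Set.mem_prod.mpr ⟨hw1, hu2⟩
  have hx : ((u1, w2) : EuclideanSpace ℂ (Fin n) × EuclideanSpace ℂ (Fin m)) ∈ D₁ ×ˢ D₂ :=
    Set.mem_prod.mpr ⟨hu1, hw2⟩
  have hw : ((u1, z2) : EuclideanSpace ℂ (Fin n) × EuclideanSpace ℂ (Fin m)) ∈ D₁ ×ˢ D₂ :=
    Set.mem_prod.mpr ⟨hu1, hz2⟩
  have hsym2a : kobayashi D₂ w2 u2 = kobayashi D₂ u2 w2 := KobAux.kobayashi_symm _ _ _
  have hsym2b : kobayashi D₂ u2 z2 = kobayashi D₂ z2 u2 := KobAux.kobayashi_symm _ _ _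
  have hsym2c : kobayashi D₂ w2 z2 = kobayashi D₂ z2 w2 := KobAux.kobayashi_symm _ _ _
  have hupx : kobayashi (D₁ ×ˢ D₂) (z1, u2) (u1, w2) ≤
      max (kobayashi D₁ z1 u1) (kobayashi D₂ u2 w2) + 1 :=
    KobAux.kobayashi_prod_le hz1 hu1 hu2 hw2 hne1 hne2 one_pos
  have hupq : kobayashi (D₁ ×ˢ D₂) (u1, w2) (w1, u2) ≤
      max (kobayashi D₁ u1 w1) (kobayashi D₂ w2 u2) + 1 :=
    KobAux.kobayashi_prod_le hu1 hw1 hw2 hu2 hne1 hne2 one_pos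
  have huppw : kobayashi (D₁ ×ˢ D₂) (z1, u2) (u1, z2) ≤
      max (kobayashi D₁ z1 u1) (kobayashi D₂ u2 z2) + 1 :=
    KobAux.kobayashi_prod_le hz1 hu1 hu2 hz2 hne1 hne2 one_pos
  have hupwq : kobayashi (D₁ ×ˢ D₂) (u1, z2) (w1, u2) ≤
      max (kobayashi D₁ u1 w1) (kobayashi D₂ z2 u2) + 1 :=
    KobAux.kobayashi_prod_le hu1 hw1 hz2 hu2 hne1 hne2 one_pos
  have hlopq : kobayashi D₁ z1 w1 ≤ kobayashi (D₁ ×ˢ D₂) (z1, u2) (w1, u2) :=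
    KobAux.kobayashi_proj_fst hne1 hne2 hp hq
  have hlowx : kobayashi D₂ z2 w2 ≤ kobayashi (D₁ ×ˢ D₂) (u1, z2) (u1, w2) :=
    KobAux.kobayashi_proj_snd hne1 hne2 hw hx
  have hloxw : kobayashi D₂ w2 z2 ≤ kobayashi (D₁ ×ˢ D₂) (u1, w2) (u1, z2) :=
    KobAux.kobayashi_proj_snd hne1 hne2 hx hw
  have hlopw1 : kobayashi D₁ z1 u1 ≤ kobayashi (D₁ ×ˢ D₂) (z1, u2) (u1, z2) :=
    KobAux.kobayashi_proj_fst hne1 hne2 hp hw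
  have hlopw2 : kobayashi D₂ u2 z2 ≤ kobayashi (D₁ ×ˢ D₂) (z1, u2) (u1, z2) :=
    KobAux.kobayashi_proj_snd hne1 hne2 hp hw
  have hlowq1 : kobayashi D₁ u1 w1 ≤ kobayashi (D₁ ×ˢ D₂) (u1, z2) (w1, u2) :=
    KobAux.kobayashi_proj_fst hne1 hne2 hw hq
  have hlowq2 : kobayashi D₂ z2 u2 ≤ kobayashi (D₁ ×ˢ D₂) (u1, z2) (w1, u2) :=
    KobAux.kobayashi_proj_snd hne1 hne2 hw hq
  have hfinal := hC (z1, u2) hp (w1, u2) hq (u1, w2) hx (u1, z2) hw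
  set dpw := kobayashi (D₁ ×ˢ D₂) (z1, u2) (u1, z2) with hdpw
  set dwx := kobayashi (D₁ ×ˢ D₂) (u1, z2) (u1, w2) with hdwx
  set dpx := kobayashi (D₁ ×ˢ D₂) (z1, u2) (u1, w2) with hdpx
  set dxw := kobayashi (D₁ ×ˢ D₂) (u1, w2) (u1, z2) with hdxw
  set dwq := kobayashi (D₁ ×ˢ D₂) (u1, z2) (w1, u2) with hdwq
  set dxq := kobayashi (D₁ ×ˢ D₂) (u1, w2) (w1, u2) with hdxq
  set dpq := kobayashi (D₁ ×ˢ D₂) (z1, u2) (w1, u2) with hdpq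
  rw [hsym2a] at hupq
  rw [hsym2b] at huppw hlopw2
  rw [hsym2c] at hloxw
  have hmaxb : ∀ {α β : ℝ}, α ≤ s1 + 1 → β ≤ s2 + 1 → max α β ≤ max s1 s2 + 1 := by
    intro α β h1 h2
    apply max_le
    · exact le_trans h1 (by linarith [le_max_left s1 s2])
    · exact le_trans h2 (by linarith [le_max_right s1 s2])
  have hBpx : dpx ≤ max s1 s2 + 2 := le_trans hupx (by linarith [hmaxb hu1a hu2b])
  have hBxq : dxq ≤ max s1 s2 + 2 := le_trans hupq (by linarith [hmaxb hu1b hu2b])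
  have hBpw : dpw ≤ max s1 s2 + 2 := le_trans huppw (by linarith [hmaxb hu1a hu2a])
  have hBwq : dwq ≤ max s1 s2 + 2 := le_trans hupwq (by linarith [hmaxb hu1b hu2a])
  have hLpw : max s1 s2 - 1 ≤ dpw := by
    rcases max_cases s1 s2 with ⟨hEq, -⟩ | ⟨hEq, -⟩ <;> rw [hEq]
    · linarith
    · linarith
  have hLwq : max s1 s2 - 1 ≤ dwq := by
    rcases max_cases s1 s2 with ⟨hEq, -⟩ | ⟨hEq, -⟩ <;> rw [hEq]
    · linarith
    · linarith
  have hLwx : 2 * s2 ≤ dwx := by linarith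
  have hLxw : 2 * s2 ≤ dxw := by linarith
  have hLpq : 2 * s1 ≤ dpq := by linarith
  have hterm1 : 2 * s2 - 3 ≤ dpw + dwx - dpx := by linarith
  have hterm2 : 2 * s2 - 3 ≤ dxw + dwq - dxq := by linarith
  have hmin : 2 * s2 - 3 ≤ min (dpw + dwx - dpx) (dxw + dwq - dxq) :=
    le_min hterm1 hterm2
  have hsub : dpw + dwq - dpq ≤ 2 * max s1 s2 - 2 * s1 + 4 := by linarith
  have hmm : s1 + s2 - max s1 s2 = min s1 s2 := by
    rcases le_total s1 s2 with h | h
    · rw [max_eq_right h, min_eq_left h]; ring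
    · rw [max_eq_left h, min_eq_right h]; ring
  have hminR : R / 2 ≤ min s1 s2 := by
    apply le_min <;> linarith
  have hcontra : C < min (dpw + dwx - dpx) (dxw + dwq - dxq) - (dpw + dwq - dpq) := by
    have h1 : 2 * min s1 s2 - 7 ≤
        min (dpw + dwx - dpx) (dxw + dwq - dxq) - (dpw + dwq - dpq) := by
      linarith
    have h2 : C < 2 * (R / 2) - 7 := by
      have := le_max_left C 0
      rw [hR]; linarith
    linarith
  linarith
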